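/- Let P be a countable partial order satisfying the one-point extension property, f an order automorphism of P, and x ∈ P with parity(x, f) ≠ 0. Then the orbital of x, with the induced order, is order-isomorphic to P if and only if the orbital of x is upper-directed (any two of its elements have an upper bound in it). -/

import Mathlib

variable {P : Type*} [PartialOrder P]

/-- A partial order `P` satisfies the one-point extension property if for all finite
subsets `A, B, C` with `a < b` for `a ∈ A`, `b ∈ B`, no `c ∈ C` below any `a ∈ A`, and
no `b ∈ B` below any `c ∈ C`, there is a point `z` strictly above every `a ∈ A`,
strictly below every `b ∈ B`, and incomparable to every `c ∈ C`. A countable partial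
order with this property is the random poset. -/
def OnePointExt (P : Type*) [PartialOrder P] : Prop :=
  ∀ A B C : Finset P,
    (∀ a ∈ A, ∀ b ∈ B, a < b) →
    (∀ c ∈ C, ∀ a ∈ A, ¬ c ≤ a) →
    (∀ b ∈ B, ∀ c ∈ C, ¬ b ≤ c) →
    ∃ z : P, (∀ a ∈ A, a < z) ∧ (∀ b ∈ B, z < b) ∧ (∀ c ∈ C, ¬ z ≤ c ∧ ¬ c ≤ z)

/-- `x ∼_f y` iff there are `i j : ℤ` with `f^i x ≤ y ≤ f^j x`. -/
def orbRel (f : P ≃o P) (x y : P) : Prop :=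
  ∃ i j : ℤ, (f ^ i) x ≤ y ∧ y ≤ (f ^ j) x

/-- The spiral length of `x` under `f`: the least `n ≥ 1` such that `x` and `f^n x`
are comparable, and `∞` if no such `n` exists. -/
noncomputable def spiral (f : P ≃o P) (x : P) : ℕ∞ :=
  sInf ((fun m : ℕ => (m : ℕ∞)) ''
    {m : ℕ | 1 ≤ m ∧ (x ≤ (f ^ (m : ℤ)) x ∨ (f ^ (m : ℤ)) x ≤ x)})

open Classical in
/-- The parity of `x` under `f`: `+1` if `sp(x,f) = n < ∞` and `x < f^n x`, `-1` if
`sp(x,f) = n < ∞` and `f^n x < x`, and `0` otherwise. -/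
noncomputable def parity (f : P ≃o P) (x : P) : ℤ :=
  if ∃ n : ℕ, spiral f x = (n : ℕ∞) ∧ x < (f ^ (n : ℤ)) x then 1
  else if ∃ n : ℕ, spiral f x = (n : ℕ∞) ∧ (f ^ (n : ℤ)) x < x then -1
  else 0


attribute [local instance] Classical.propDecidable

section BackForth

variable {X Y : Type*} [PartialOrder X] [PartialOrder Y]

/-- `p` is a finite partial order-isomorphism (as a set of pairs). -/
def Good (p : Finset (X × Y)) : Prop :=
  ∀ q ∈ p, ∀ r ∈ p, (q.1 ≤ r.1 ↔ q.2 ≤ r.2)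

lemma good_swap {p : Finset (X × Y)} (hp : Good p) : Good (p.image Prod.swap) := by
  intro q hq r hr
  simp only [Finset.mem_image] at hq hr
  obtain ⟨q', hq', rfl⟩ := hq
  obtain ⟨r', hr', rfl⟩ := hr
  exact (hp q' hq' r' hr').symm

lemma extend_right (hY : OnePointExt Y) (p : Finset (X × Y)) (hp : Good p) (a : X) :
    ∃ b : Y, Good (insert (a, b) p) := by
  by_cases hmem : ∃ q ∈ p, q.1 = a
  · obtain ⟨q, hq, hq1⟩ := hmem
    refine ⟨q.2, ?_⟩
    have h2 : (a, q.2) = q := by rw [← hq1]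
    rw [h2, Finset.insert_eq_self.2 hq]
    exact hp
  push_neg at hmem
  set A := (p.filter (fun q => q.1 < a)).image Prod.snd with hA
  set B := (p.filter (fun q => a < q.1)).image Prod.snd with hB
  set C := (p.filter (fun q => ¬ q.1 ≤ a ∧ ¬ a ≤ q.1)).image Prod.snd with hC
  have memA : ∀ y ∈ A, ∃ q ∈ p, q.1 < a ∧ q.2 = y := by
    intro y hy
    simp only [hA, Finset.mem_image, Finset.mem_filter] at hy
    obtain ⟨q, ⟨hq, hlt⟩, rfl⟩ := hy
    exact ⟨q, hq, hlt, rfl⟩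
  have memB : ∀ y ∈ B, ∃ q ∈ p, a < q.1 ∧ q.2 = y := by
    intro y hy
    simp only [hB, Finset.mem_image, Finset.mem_filter] at hy
    obtain ⟨q, ⟨hq, hlt⟩, rfl⟩ := hy
    exact ⟨q, hq, hlt, rfl⟩
  have memC : ∀ y ∈ C, ∃ q ∈ p, (¬ q.1 ≤ a ∧ ¬ a ≤ q.1) ∧ q.2 = y := by
    intro y hy
    simp only [hC, Finset.mem_image, Finset.mem_filter] at hy
    obtain ⟨q, ⟨hq, hlt⟩, rfl⟩ := hy
    exact ⟨q, hq, hlt, rfl⟩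
  have memA' : ∀ q ∈ p, q.1 < a → q.2 ∈ A := by
    intro q hq h
    exact Finset.mem_image_of_mem _ (Finset.mem_filter.2 ⟨hq, h⟩)
  have memB' : ∀ q ∈ p, a < q.1 → q.2 ∈ B := by
    intro q hq h
    exact Finset.mem_image_of_mem _ (Finset.mem_filter.2 ⟨hq, h⟩)
  have memC' : ∀ q ∈ p, (¬ q.1 ≤ a ∧ ¬ a ≤ q.1) → q.2 ∈ C := by
    intro q hq h
    exact Finset.mem_image_of_mem _ (Finset.mem_filter.2 ⟨hq, h⟩)
  obtain ⟨z, hzA, hzB, hzC⟩ := hY A B C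
    (by
      intro u hu v hv
      obtain ⟨q, hq, hq1, rfl⟩ := memA u hu
      obtain ⟨r, hr, hr1, rfl⟩ := memB v hv
      have hle : q.2 ≤ r.2 := (hp q hq r hr).1 (le_of_lt (hq1.trans hr1))
      refine lt_of_le_of_ne hle (fun h => ?_)
      have h2 : r.1 ≤ q.1 := (hp r hr q hq).2 (le_of_eq h.symm)
      exact absurd ((hr1.trans_le h2).trans hq1) (lt_irrefl a)
    )
    (by
      intro u hu v hv
      obtain ⟨q, hq, ⟨hq1, hq2⟩, rfl⟩ := memC u hu
      obtain ⟨r, hr, hr1, rfl⟩ := memA v hv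
      intro h
      exact hq1 (((hp q hq r hr).2 h).trans hr1.le)
    )
    (by
      intro u hu v hv
      obtain ⟨q, hq, hq1, rfl⟩ := memB u hu
      obtain ⟨r, hr, ⟨hr1, hr2⟩, rfl⟩ := memC v hv
      intro h
      exact hr2 (hq1.trans_le ((hp q hq r hr).2 h)).le
    )
  refine ⟨z, ?_⟩
  have key : ∀ q ∈ p, (q.1 ≤ a ↔ q.2 ≤ z) ∧ (a ≤ q.1 ↔ z ≤ q.2) := by
    intro q hq
    have hne := hmem q hq
    by_cases hle : q.1 ≤ a
    · have hlt : q.1 < a := lt_of_le_of_ne hle hne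
      have hz : q.2 < z := hzA _ (memA' q hq hlt)
      refine ⟨⟨fun _ => hz.le, fun _ => hlt.le⟩, ?_, ?_⟩
      · intro h; exact absurd (hlt.trans_le h) (lt_irrefl _)
      · intro h; exact absurd (h.trans_lt hz) (lt_irrefl _)
    · by_cases hge : a ≤ q.1
      · have hlt : a < q.1 := lt_of_le_of_ne hge (fun h => hne h.symm)
        have hz : z < q.2 := hzB _ (memB' q hq hlt)
        refine ⟨?_, ⟨fun _ => hz.le, fun _ => hlt.le⟩⟩
        refine ⟨fun h => absurd h hle, fun h => absurd (hz.trans_le h) (lt_irrefl _)⟩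
      · have hz := hzC _ (memC' q hq ⟨hle, hge⟩)
        refine ⟨⟨fun h => absurd h hle, fun h => absurd h (fun hh => hz.2 hh)⟩,
          ⟨fun h => absurd h hge, fun h => absurd h (fun hh => hz.1 hh)⟩⟩
  intro q hq r hr
  rcases Finset.mem_insert.1 hq with rfl | hq'
  · rcases Finset.mem_insert.1 hr with rfl | hr'
    · simp
    · exact (key r hr').2
  · rcases Finset.mem_insert.1 hr with rfl | hr'
    · exact (key q hq').1
    · exact hp q hq' r hr'

lemma extend_left (hX : OnePointExt X) (p : Finset (X × Y)) (hp : Good p) (b : Y) :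
    ∃ a : X, Good (insert (a, b) p) := by
  obtain ⟨a, ha⟩ := extend_right hX (p.image Prod.swap) (good_swap hp) b
  refine ⟨a, ?_⟩
  have h2 : insert (a, b) p = ((insert (b, a) (p.image Prod.swap)).image Prod.swap) := by
    rw [Finset.image_insert]
    simp [Finset.image_image, Function.comp_def]
  rw [h2]
  exact good_swap ha

lemma iso_of_onePointExt' [Countable X] [Countable Y]
    (hX : OnePointExt X) (hY : OnePointExt Y) : Nonempty (X ≃o Y) := by
  have hXne : Nonempty X := by
    obtain ⟨z, -⟩ := hX ∅ ∅ ∅ (by simp) (by simp) (by simp); exact ⟨z⟩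
  have hYne : Nonempty Y := by
    obtain ⟨z, -⟩ := hY ∅ ∅ ∅ (by simp) (by simp) (by simp); exact ⟨z⟩
  obtain ⟨u, hu⟩ := exists_surjective_nat X
  obtain ⟨v, hv⟩ := exists_surjective_nat Y
  -- build the chain
  let step : {p : Finset (X × Y) // Good p} → ℕ → {p : Finset (X × Y) // Good p} :=
    fun p k =>
      if k % 2 = 0 then
        ⟨insert (u (k / 2), Classical.choose (extend_right hY p.1 p.2 (u (k / 2)))) p.1,
          Classical.choose_spec (extend_right hY p.1 p.2 (u (k / 2)))⟩
      else
        ⟨insert (Classical.choose (extend_left hX p.1 p.2 (v (k / 2))), v (k / 2)) p.1,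
          Classical.choose_spec (extend_left hX p.1 p.2 (v (k / 2)))⟩
  let seq : ℕ → {p : Finset (X × Y) // Good p} := fun k =>
    Nat.rec ⟨∅, by intro q hq; simp at hq⟩ (fun k ih => step ih k) k
  have hsub : ∀ k, (seq k).1 ⊆ (seq (k + 1)).1 := by
    intro k
    show (seq k).1 ⊆ (step (seq k) k).1
    dsimp only [step]
    split <;> exact Finset.subset_insert _ _
  have hmono : ∀ {k l}, k ≤ l → (seq k).1 ⊆ (seq l).1 := by
    intro k l h
    induction l, h using Nat.le_induction with
    | base => exact Finset.Subset.refl _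
    | succ l hkl ih => exact ih.trans (hsub l)
  have hX_mem : ∀ a : X, ∃ k, ∃ b, (a, b) ∈ (seq k).1 := by
    intro a
    obtain ⟨m, rfl⟩ := hu a
    refine ⟨2 * m + 1, ?_⟩
    show ∃ b, (u m, b) ∈ (step (seq (2 * m)) (2 * m)).1
    dsimp only [step]
    have h0 : (2 * m) % 2 = 0 := by omega
    have h1 : (2 * m) / 2 = m := by omega
    rw [if_pos h0, h1]
    exact ⟨_, Finset.mem_insert_self _ _⟩
  have hY_mem : ∀ b : Y, ∃ k, ∃ a, (a, b) ∈ (seq k).1 := by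
    intro b
    obtain ⟨m, rfl⟩ := hv b
    refine ⟨2 * m + 2, ?_⟩
    show ∃ a, (a, v m) ∈ (step (seq (2 * m + 1)) (2 * m + 1)).1
    dsimp only [step]
    have h0 : ¬ (2 * m + 1) % 2 = 0 := by omega
    have h1 : (2 * m + 1) / 2 = m := by omega
    rw [if_neg h0, h1]
    exact ⟨_, Finset.mem_insert_self _ _⟩
  -- the global relation
  set R : X → Y → Prop := fun a b => ∃ k, (a, b) ∈ (seq k).1 with hR
  have hGood : ∀ {a b a' b'}, R a b → R a' b' → (a ≤ a' ↔ b ≤ b') := by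
    rintro a b a' b' ⟨k, hk⟩ ⟨k', hk'⟩
    have h1 : (a, b) ∈ (seq (max k k')).1 := hmono (le_max_left _ _) hk
    have h2 : (a', b') ∈ (seq (max k k')).1 := hmono (le_max_right _ _) hk'
    exact (seq (max k k')).2 _ h1 _ h2
  have hfun : ∀ {a b b'}, R a b → R a b' → b = b' := by
    intro a b b' h h'
    exact le_antisymm ((hGood h h').1 (le_refl a)) ((hGood h' h).1 (le_refl a))
  have hinj : ∀ {a a' b}, R a b → R a' b → a = a' := by
    intro a a' b h h'
    exact le_antisymm ((hGood h h').2 (le_refl b)) ((hGood h' h).2 (le_refl b))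
  have htotX : ∀ a : X, ∃ b, R a b := fun a => by
    obtain ⟨k, b, hk⟩ := hX_mem a; exact ⟨b, k, hk⟩
  have htotY : ∀ b : Y, ∃ a, R a b := fun b => by
    obtain ⟨k, a, hk⟩ := hY_mem b; exact ⟨a, k, hk⟩
  let F : X → Y := fun a => Classical.choose (htotX a)
  let G : Y → X := fun b => Classical.choose (htotY b)
  have hF : ∀ a, R a (F a) := fun a => Classical.choose_spec (htotX a)
  have hG : ∀ b, R (G b) b := fun b => Classical.choose_spec (htotY b)
  refine ⟨⟨⟨F, G, ?_, ?_⟩, ?_⟩⟩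
  · intro a; exact hinj (hG (F a)) (hF a)
  · intro b; exact hfun (hF (G b)) (hG b)
  · intro a a'; exact (hGood (hF a) (hF a')).symm

end BackForth


section Core

variable (f : P ≃o P) (x : P)

lemma opx_pow_pow (a b : ℤ) : (f ^ a) ((f ^ b) x) = (f ^ (a + b)) x := by
  rw [zpow_add]; rfl

lemma opx_pow_le_pow_iff (a b : ℤ) : (f ^ a) x ≤ (f ^ b) x ↔ x ≤ (f ^ (b - a)) x := by
  conv_lhs => rw [show (f ^ b) x = (f ^ a) ((f ^ (b - a)) x) by
    rw [opx_pow_pow]; congr 1; ring_nf]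
  exact (f ^ a).le_iff_le

lemma core_onePointExt (n : ℕ) (hn : 1 ≤ n) (hlt : x < (f ^ (n : ℤ)) x)
    (hmin : ∀ m : ℕ, 1 ≤ m → m < n → ¬(x ≤ (f ^ (m : ℤ)) x ∨ (f ^ (m : ℤ)) x ≤ x))
    (hdir : ∀ a b : P, orbRel f x a → orbRel f x b →
      ∃ c : P, orbRel f x c ∧ a ≤ c ∧ b ≤ c)
    (hP : OnePointExt P) :
    OnePointExt {y : P | orbRel f x y} := by
  set D : Set ℤ := {m : ℤ | x ≤ (f ^ m) x} with hD
  have hzero : (0 : ℤ) ∈ D := by simp [hD]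
  have hadd : ∀ {a b : ℤ}, a ∈ D → b ∈ D → a + b ∈ D := by
    intro a b ha hb
    have h1 : (f ^ b) x ≤ (f ^ (a + b)) x := (opx_pow_le_pow_iff f x b (a+b)).2 (by simpa [hD] using ha)
    exact le_trans hb h1
  have hnmem : (n : ℤ) ∈ D := hlt.le
  have hmulmem : ∀ (d : ℤ), d ∈ D → ∀ k : ℕ, (k : ℤ) * d ∈ D := by
    intro d hd k
    induction k with
    | zero => simpa using hzero
    | succ k ih =>
        have h1 : ((k + 1 : ℕ) : ℤ) * d = (k : ℤ) * d + d := by push_cast; ring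
        rw [h1]; exact hadd ih hd
  have hnonneg : ∀ m ∈ D, (0 : ℤ) ≤ m := by
    intro m hm
    by_contra hneg
    push_neg at hneg
    -- r = m % n ∈ D
    have hn0 : (0:ℤ) < (n:ℤ) := by exact_mod_cast hn
    have hq : m / (n:ℤ) < 0 := Int.ediv_neg_of_neg_of_pos hneg hn0
    have hr : m % (n:ℤ) ∈ D := by
      have : m % (n:ℤ) = m + (-(m / (n:ℤ))).toNat * (n:ℤ) := by
        rw [Int.emod_def]
        have : ((-(m / (n:ℤ))).toNat : ℤ) = -(m / (n:ℤ)) := Int.toNat_of_nonneg (by omega)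
        rw [this]; ring
      rw [this, add_comm]
      exact hadd (hmulmem _ hnmem _) hm
    have hr0 : 0 ≤ m % (n:ℤ) := Int.emod_nonneg m (by omega)
    have hrn : m % (n:ℤ) < (n:ℤ) := Int.emod_lt_of_pos m hn0
    rcases eq_or_lt_of_le hr0 with heq | hpos
    · -- m % n = 0, so -m = n * (-(m/n)) with -(m/n) ≥ 1, get contradiction
      have hmn : m = (n:ℤ) * (m / (n:ℤ)) := by
        have h := Int.emod_def m (n:ℤ); linarith
      have hmem2 : -m - (n:ℤ) ∈ D := by
        have h1 : -m - (n:ℤ) = ((-(m / (n:ℤ)) - 1).toNat : ℤ) * (n:ℤ) := by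
          rw [Int.toNat_of_nonneg (by omega)]
          linear_combination -hmn
        rw [h1]; exact hmulmem _ hnmem _
      -- x ≤ f^m x and x ≤ f^{-m-n} x ⇒ f^n x ≤ f^{-m} x; also x ≤ f^m x ⇒ f^{-m} x ≤ x
      have h1 : (f ^ ((n:ℤ))) x ≤ (f ^ (-m)) x := by
        rw [opx_pow_le_pow_iff]
        simpa [hD] using hmem2
      have h2 : (f ^ (-m)) x ≤ x := by
        have := (opx_pow_le_pow_iff f x (-m) 0).2 (by simpa [hD] using hm)
        simpa using this
      exact absurd (h1.trans h2) hlt.not_ge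
    · -- 0 < m % n < n contradicts minimality
      set r := (m % (n:ℤ)).toNat with hrdef
      have hr1 : 1 ≤ r := by omega
      have hr2 : r < n := by omega
      exact (hmin r hr1 hr2) (Or.inl (by
        have : ((r:ℤ)) = m % (n:ℤ) := by omega
        rw [this]; exact hr))
  have hstrict : ∀ m ∈ D, m ≠ 0 → x < (f ^ m) x := by
    intro m hm hne
    rcases lt_or_eq_of_le (hm : x ≤ (f ^ m) x) with h | h
    · exact h
    · exfalso
      have : -m ∈ D := by
        show x ≤ (f ^ (-m)) x
        have h0 : (f ^ (m:ℤ)) x ≤ (f ^ (0:ℤ)) x := by simp [← h]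
        have h1 := (opx_pow_le_pow_iff f x m 0).1 h0
        simpa using h1
      have h1 := hnonneg m hm
      have h2 := hnonneg _ this
      omega
  -- directedness gives consecutive elements
  have hx_orb : orbRel f x x := ⟨0, 0, by simp⟩
  have hfx_orb : orbRel f x (f x) := by
    refine ⟨1 - (n:ℤ), 1, ?_, ?_⟩
    · have h2 : x ≤ (f ^ ((1:ℤ) - (1 - (n:ℤ)))) x := by
        rw [show (1:ℤ) - (1 - (n:ℤ)) = (n:ℤ) by ring]; exact hnmem
      have h3 := (opx_pow_le_pow_iff f x (1 - (n:ℤ)) 1).2 h2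
      rwa [show (f ^ (1:ℤ)) x = f x by simp] at h3
    · rw [show (f ^ (1:ℤ)) x = f x by simp]
  obtain ⟨c, ⟨i, j, hci, hcj⟩, hxc, hfxc⟩ := hdir x (f x) hx_orb hfx_orb
  have hjD : j ∈ D := le_trans hxc hcj
  have hj1D : j - 1 ∈ D := by
    have h1 : f x ≤ (f ^ (j:ℤ)) x := le_trans hfxc hcj
    have h2 : (f ^ (1:ℤ)) x ≤ (f ^ (j:ℤ)) x := by
      have : (f ^ (1:ℤ)) x = f x := by simp
      rw [this]; exact h1
    exact (opx_pow_le_pow_iff f x 1 j).1 h2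
  -- all sufficiently large integers are in D
  have hlarge : ∃ N : ℤ, 1 ≤ N ∧ ∀ m : ℤ, N ≤ m → m ∈ D := by
    set v := j - 1 with hv
    have hv0 : 0 ≤ v := hnonneg _ hj1D
    rcases eq_or_lt_of_le hv0 with hv00 | hvpos
    · -- v = 0, so 1 = j ∈ D
      refine ⟨1, le_refl _, fun m hm => ?_⟩
      have hj1 : j = 1 := by omega
      rw [hj1] at hjD
      have h2 : ((m.toNat : ℤ)) * 1 ∈ D := hmulmem 1 hjD m.toNat
      rw [mul_one] at h2
      rwa [Int.toNat_of_nonneg (by omega)] at h2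
    · refine ⟨v * v + 1, by nlinarith, fun m hm => ?_⟩
      set q := m / v with hq
      set r := m % v with hr
      have hr0 : 0 ≤ r := Int.emod_nonneg m (by omega)
      have hrv : r < v := Int.emod_lt_of_pos m hvpos
      have hqv : v ≤ q := by
        rw [hq, Int.le_ediv_iff_mul_le hvpos]; nlinarith
      have hdecomp : m = (q - r) * v + r * (v + 1) := by
        have : m = v * q + r := (Int.mul_ediv_add_emod m v).symm
        rw [this]; ring
      have hm1 : (q - r) * v ∈ D := by
        have h1 : (q - r) * v = ((q - r).toNat : ℤ) * v := by
          rw [Int.toNat_of_nonneg (by omega)]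
        rw [h1]; exact hmulmem _ hj1D _
      have hm2 : r * (v + 1) ∈ D := by
        have h1 : r * (v + 1) = (r.toNat : ℤ) * (v + 1) := by
          rw [Int.toNat_of_nonneg hr0]
        rw [h1]
        exact hmulmem _ (by simpa [hv] using hjD) _
      rw [hdecomp]; exact hadd hm1 hm2
  obtain ⟨N, hN1, hNmem⟩ := hlarge
  have hstrictpow : ∀ a b : ℤ, N ≤ b - a → (f ^ a) x < (f ^ b) x := by
    intro a b h
    have h1 : x < (f ^ (b - a)) x := hstrict _ (hNmem _ h) (by omega)
    have h2 := (f ^ a).strictMono h1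
    rwa [opx_pow_pow, show a + (b - a) = b by ring] at h2
  have hlepow : ∀ a b : ℤ, (f ^ a) x ≤ (f ^ b) x → 0 ≤ b - a := by
    intro a b h
    exact hnonneg _ ((opx_pow_le_pow_iff f x a b).1 h)
  intro A B C hAB hCA hBC
  let α : {y : P | orbRel f x y} → ℤ := fun y => Classical.choose y.2
  let β : {y : P | orbRel f x y} → ℤ := fun y =>
    Classical.choose (Classical.choose_spec y.2)
  have hαβ : ∀ y : {y : P | orbRel f x y},
      (f ^ (α y)) x ≤ ↑y ∧ (↑y : P) ≤ (f ^ (β y)) x :=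
    fun y => Classical.choose_spec (Classical.choose_spec y.2)
  set T := A ∪ B ∪ C with hT
  set I : Finset ℤ := T.image α ∪ T.image β ∪ {0} with hI
  have hIne : I.Nonempty := ⟨0, by simp [hI]⟩
  set M : ℤ := max N 1 with hM
  set L : ℤ := I.min' hIne - M with hL
  set U : ℤ := I.max' hIne + M with hU
  have hMN : N ≤ M := le_max_left _ _
  have hM1 : 1 ≤ M := le_max_right _ _
  have hαI : ∀ y ∈ T, α y ∈ I := by
    intro y hy; exact Finset.mem_union_left _ (Finset.mem_union_left _ (Finset.mem_image_of_mem _ hy))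
  have hβI : ∀ y ∈ T, β y ∈ I := by
    intro y hy; exact Finset.mem_union_left _ (Finset.mem_union_right _ (Finset.mem_image_of_mem _ hy))
  have hLlow : ∀ y ∈ T, (f ^ L) x < (↑y : P) := by
    intro y hy
    have h1 : (f ^ L) x < (f ^ (α y)) x := by
      apply hstrictpow
      have := I.min'_le _ (hαI y hy)
      omega
    exact h1.trans_le (hαβ y).1
  have hUhigh : ∀ y ∈ T, (↑y : P) < (f ^ U) x := by
    intro y hy
    have h1 : (f ^ (β y)) x < (f ^ U) x := by
      apply hstrictpow
      have := I.le_max' _ (hβI y hy)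
      omega
    exact ((hαβ y).2).trans_lt h1
  have hLU : (f ^ L) x < (f ^ U) x := by
    apply hstrictpow
    have := I.min'_le _ (Finset.mem_union_right _ (Finset.mem_singleton_self 0))
    have := I.le_max' _ (Finset.mem_union_right _ (Finset.mem_singleton_self 0))
    omega
  have hCnotL : ∀ y ∈ T, ¬ (↑y : P) ≤ (f ^ L) x := by
    intro y hy h
    have h1 : (f ^ (α y)) x ≤ (f ^ L) x := (hαβ y).1.trans h
    have h2 := hlepow _ _ h1
    have := I.min'_le _ (hαI y hy)
    omega
  have hCnotU : ∀ y ∈ T, ¬ (f ^ U) x ≤ (↑y : P) := by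
    intro y hy h
    have h1 : (f ^ U) x ≤ (f ^ (β y)) x := h.trans (hαβ y).2
    have h2 := hlepow _ _ h1
    have := I.le_max' _ (hβI y hy)
    omega
  have hAT : ∀ y ∈ A, y ∈ T := fun y hy =>
    Finset.mem_union_left _ (Finset.mem_union_left _ hy)
  have hBT : ∀ y ∈ B, y ∈ T := fun y hy =>
    Finset.mem_union_left _ (Finset.mem_union_right _ hy)
  have hCT : ∀ y ∈ C, y ∈ T := fun y hy => Finset.mem_union_right _ hy
  -- apply the one-point extension in P
  obtain ⟨z, hzA, hzB, hzC⟩ := hP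
    (A.image Subtype.val ∪ {(f ^ L) x})
    (B.image Subtype.val ∪ {(f ^ U) x})
    (C.image Subtype.val)
    (by
      intro a ha b hb
      rcases Finset.mem_union.1 ha with ha' | ha'
      · obtain ⟨a₀, ha₀, rfl⟩ := Finset.mem_image.1 ha'
        rcases Finset.mem_union.1 hb with hb' | hb'
        · obtain ⟨b₀, hb₀, rfl⟩ := Finset.mem_image.1 hb'
          exact Subtype.coe_lt_coe.2 (hAB a₀ ha₀ b₀ hb₀)
        · rw [Finset.mem_singleton.1 hb']
          exact hUhigh a₀ (hAT a₀ ha₀)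
      · rw [Finset.mem_singleton.1 ha']
        rcases Finset.mem_union.1 hb with hb' | hb'
        · obtain ⟨b₀, hb₀, rfl⟩ := Finset.mem_image.1 hb'
          exact hLlow b₀ (hBT b₀ hb₀)
        · rw [Finset.mem_singleton.1 hb']
          exact hLU)
    (by
      intro c hc a ha
      obtain ⟨c₀, hc₀, rfl⟩ := Finset.mem_image.1 hc
      rcases Finset.mem_union.1 ha with ha' | ha'
      · obtain ⟨a₀, ha₀, rfl⟩ := Finset.mem_image.1 ha'
        exact fun h => hCA c₀ hc₀ a₀ ha₀ (Subtype.coe_le_coe.1 h)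
      · rw [Finset.mem_singleton.1 ha']
        exact hCnotL c₀ (hCT c₀ hc₀))
    (by
      intro b hb c hc
      obtain ⟨c₀, hc₀, rfl⟩ := Finset.mem_image.1 hc
      rcases Finset.mem_union.1 hb with hb' | hb'
      · obtain ⟨b₀, hb₀, rfl⟩ := Finset.mem_image.1 hb'
        exact fun h => hBC b₀ hb₀ c₀ hc₀ (Subtype.coe_le_coe.1 h)
      · rw [Finset.mem_singleton.1 hb']
        exact hCnotU c₀ (hCT c₀ hc₀))
  have hzL : (f ^ L) x < z := hzA _ (Finset.mem_union_right _ (Finset.mem_singleton_self _))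
  have hzU : z < (f ^ U) x := hzB _ (Finset.mem_union_right _ (Finset.mem_singleton_self _))
  have hzS : orbRel f x z := ⟨L, U, hzL.le, hzU.le⟩
  refine ⟨⟨z, hzS⟩, ?_, ?_, ?_⟩
  · intro a ha
    exact Subtype.coe_lt_coe.1 (by
      exact_mod_cast hzA _ (Finset.mem_union_left _ (Finset.mem_image_of_mem _ ha)))
  · intro b hb
    exact Subtype.coe_lt_coe.1 (by
      exact_mod_cast hzB _ (Finset.mem_union_left _ (Finset.mem_image_of_mem _ hb)))
  · intro c hc
    have := hzC _ (Finset.mem_image_of_mem Subtype.val hc)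
    exact ⟨fun h => this.1 (Subtype.coe_le_coe.2 h), fun h => this.2 (Subtype.coe_le_coe.2 h)⟩

end Core


section SpiralDecode

variable {P : Type*} [PartialOrder P]

lemma opx_spiral_spec {f : P ≃o P} {x : P} {n : ℕ} (h : spiral f x = (n : ℕ∞)) :
    (1 ≤ n ∧ (x ≤ (f ^ (n : ℤ)) x ∨ (f ^ (n : ℤ)) x ≤ x)) ∧
      ∀ m : ℕ, 1 ≤ m → m < n → ¬(x ≤ (f ^ (m : ℤ)) x ∨ (f ^ (m : ℤ)) x ≤ x) := by
  set A := {m : ℕ | 1 ≤ m ∧ (x ≤ (f ^ (m : ℤ)) x ∨ (f ^ (m : ℤ)) x ≤ x)} with hA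
  by_cases hne : A.Nonempty
  · have hmem := Nat.sInf_mem hne
    have heq : spiral f x = ((sInf A : ℕ) : ℕ∞) := by
      refine le_antisymm (sInf_le ⟨sInf A, hmem, rfl⟩) (le_sInf ?_)
      rintro y ⟨m, hm, rfl⟩
      show ((sInf A : ℕ) : ℕ∞) ≤ (m : ℕ∞)
      exact_mod_cast Nat.sInf_le hm
    rw [h] at heq
    have hn : n = sInf A := by exact_mod_cast heq
    subst hn
    refine ⟨hmem, fun m h1 h2 hcomp => absurd (Nat.sInf_le (show m ∈ A from ⟨h1, hcomp⟩)) (by omega)⟩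
  · exfalso
    rw [Set.not_nonempty_iff_eq_empty] at hne
    have : spiral f x = ⊤ := by
      rw [spiral, ← hA, hne]
      simp
    rw [h] at this
    exact (ENat.coe_ne_top n) this

lemma opx_inv_zpow_apply (f : P ≃o P) (i : ℤ) (x : P) :
    (f⁻¹ ^ i) x = (f ^ (-i)) x := by
  rw [inv_zpow, ← zpow_neg]

lemma opx_orbRel_inv (f : P ≃o P) (x y : P) : orbRel f⁻¹ x y ↔ orbRel f x y := by
  constructor <;> rintro ⟨i, j, h1, h2⟩
  · exact ⟨-i, -j, by rwa [opx_inv_zpow_apply] at h1, by rwa [opx_inv_zpow_apply] at h2⟩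
  · refine ⟨-i, -j, ?_, ?_⟩
    · rw [opx_inv_zpow_apply, neg_neg]; exact h1
    · rw [opx_inv_zpow_apply, neg_neg]; exact h2

lemma opx_comp_neg (f : P ≃o P) (x : P) (m : ℤ) :
    (x ≤ (f ^ (-m)) x ∨ (f ^ (-m)) x ≤ x) ↔ (x ≤ (f ^ m) x ∨ (f ^ m) x ≤ x) := by
  have h1 : (f ^ m) x ≤ x ↔ x ≤ (f ^ (-m)) x := by
    have := opx_pow_le_pow_iff f x m 0
    simpa using this
  have h2 : x ≤ (f ^ m) x ↔ (f ^ (-m)) x ≤ x := by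
    have := opx_pow_le_pow_iff f x (-m) 0
    constructor
    · intro h
      apply this.2
      simpa using h
    · intro h
      simpa using this.1 h
  tauto

end SpiralDecode

/-- For `P` the random poset (countable with the one-point extension property),
`f` an automorphism, and `x` of non-zero parity, the orbital of `x` with the induced
order is order-isomorphic to `P` if and only if it is upper-directed. -/
theorem orbital_iso_random_iff_directed [Countable P] (hP : OnePointExt P)
    (f : P ≃o P) (x : P) (hpar : parity f x ≠ 0) :
    Nonempty ({y : P | orbRel f x y} ≃o P) ↔
      (∀ a b : P, orbRel f x a → orbRel f x b →
        ∃ c : P, orbRel f x c ∧ a ≤ c ∧ b ≤ c) := by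
  constructor
  · rintro ⟨e⟩ a b ha hb
    obtain ⟨z, hz, -, -⟩ := hP {e ⟨a, ha⟩, e ⟨b, hb⟩} ∅ ∅
      (by simp) (by simp) (by simp)
    refine ⟨(e.symm z : P), (e.symm z).2, ?_, ?_⟩
    · have h1 : e ⟨a, ha⟩ < z := hz _ (by simp)
      have h2 := e.symm.monotone h1.le
      rw [e.symm_apply_apply] at h2
      exact Subtype.coe_le_coe.2 h2
    · have h1 : e ⟨b, hb⟩ < z := hz _ (by simp)
      have h2 := e.symm.monotone h1.le
      rw [e.symm_apply_apply] at h2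
      exact Subtype.coe_le_coe.2 h2
  · intro hdir
    unfold parity at hpar
    split_ifs at hpar with h1 h2
    · obtain ⟨n, hs, hlt⟩ := h1
      obtain ⟨⟨hn1, -⟩, hmin⟩ := opx_spiral_spec hs
      have hope := core_onePointExt f x n hn1 hlt hmin hdir hP
      exact iso_of_onePointExt' hope hP
    · obtain ⟨n, hs, hlt⟩ := h2
      obtain ⟨⟨hn1, -⟩, hmin⟩ := opx_spiral_spec hs
      have hlt' : x < (f⁻¹ ^ (n : ℤ)) x := by
        have h3 := (f ^ (n : ℤ))⁻¹.strictMono hlt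
        rw [show ((f ^ (n : ℤ))⁻¹ ((f ^ (n : ℤ)) x)) = x from (f ^ (n : ℤ)).symm_apply_apply x]
          at h3
        rwa [show (f⁻¹ ^ (n : ℤ)) x = (f ^ (n : ℤ))⁻¹ x by rw [inv_zpow]]
      have hmin' : ∀ m : ℕ, 1 ≤ m → m < n →
          ¬(x ≤ (f⁻¹ ^ (m : ℤ)) x ∨ (f⁻¹ ^ (m : ℤ)) x ≤ x) := by
        intro m hm1 hm2 hcomp
        rw [opx_inv_zpow_apply, opx_comp_neg] at hcomp
        exact hmin m hm1 hm2 hcomp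
      have hdir' : ∀ a b : P, orbRel f⁻¹ x a → orbRel f⁻¹ x b →
          ∃ c : P, orbRel f⁻¹ x c ∧ a ≤ c ∧ b ≤ c := by
        intro a b ha hb
        obtain ⟨c, hc, hac, hbc⟩ := hdir a b ((opx_orbRel_inv f x a).1 ha)
          ((opx_orbRel_inv f x b).1 hb)
        exact ⟨c, (opx_orbRel_inv f x c).2 hc, hac, hbc⟩
      have hope := core_onePointExt f⁻¹ x n hn1 hlt' hmin' hdir' hP
      have hset : {y : P | orbRel f x y} = {y : P | orbRel f⁻¹ x y} :=
        Set.ext fun y => (opx_orbRel_inv f x y).symm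
      rw [hset]
      exact iso_of_onePointExt' hope hP
    · exact absurd rfl hpar
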